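/- For every δ ≥ 0, λ ≥ 1, c ≥ 0 there exists K = K(δ,λ,c) ≥ 0 such that: in any proper δ-hyperbolic geodesic space (X,d), if q : I → X is an (M,λ,c)-local-quasi-geodesic on a closed interval I with M > 4Rλ + 8δλ + 2cλ + 1 (R = R(δ,λ,c) the stability constant for (λ,c)-quasi-geodesics), and [a,b] is a geodesic segment joining the endpoints of q, then the image q(I) is contained in the K-neighborhood of [a,b]. -/

import Mathlib

open Set

/-- `s` is (the image of) a geodesic segment from `x` to `y`. -/
def IsGeodesicSegment {X : Type} [MetricSpace X] (x y : X) (s : Set X) : Prop :=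
  ∃ γ : ℝ → X, γ 0 = x ∧ γ (dist x y) = y ∧
    (∀ t ∈ Icc (0:ℝ) (dist x y), ∀ t' ∈ Icc (0:ℝ) (dist x y),
      dist (γ t) (γ t') = |t - t'|) ∧
    s = γ '' Icc 0 (dist x y)

/-- A geodesic metric space: any two points are joined by a geodesic segment. -/
def GeodesicSpace (X : Type) [MetricSpace X] : Prop :=
  ∀ x y : X, ∃ s, IsGeodesicSegment x y s

/-- `δ`-hyperbolicity (thin triangles): a geodesic space in which each side of every
geodesic triangle lies in the `δ`-neighborhood of the union of the other two sides. -/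
def DeltaHyperbolic (X : Type) [MetricSpace X] (δ : ℝ) : Prop :=
  GeodesicSpace X ∧
  ∀ (x y z : X) (s₁ s₂ s₃ : Set X),
    IsGeodesicSegment x y s₁ → IsGeodesicSegment y z s₂ → IsGeodesicSegment z x s₃ →
    ∀ p ∈ s₁, ∃ q ∈ s₂ ∪ s₃, dist p q ≤ δ

/-- `q` is a `(λ,c)`-quasi-geodesic on the set `I ⊆ ℝ`. -/
def QuasiGeodesicOn {X : Type} [MetricSpace X] (q : ℝ → X) (I : Set ℝ) (lam c : ℝ) : Prop :=
  ∀ t ∈ I, ∀ t' ∈ I,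
    lam⁻¹ * |t - t'| - c ≤ dist (q t) (q t') ∧ dist (q t) (q t') ≤ lam * |t - t'| + c

/-- `q` is an `(M,λ,c)`-local-quasi-geodesic on `I`: its restriction to every
subinterval of length at most `M` is a `(λ,c)`-quasi-geodesic. -/
def LocalQuasiGeodesicOn {X : Type} [MetricSpace X] (q : ℝ → X) (I : Set ℝ)
    (M lam c : ℝ) : Prop :=
  ∀ a b : ℝ, a ∈ I → b ∈ I → a ≤ b → b - a ≤ M →
    QuasiGeodesicOn q (I ∩ Icc a b) lam c

section helpers
variable {X : Type} [MetricSpace X] {x y z p p' : X} {s : Set X}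

lemma geo_mem_left (h : IsGeodesicSegment x y s) : x ∈ s := by
  obtain ⟨γ, h0, hL, hiso, rfl⟩ := h
  exact ⟨0, ⟨le_refl 0, dist_nonneg⟩, h0⟩

lemma geo_mem_right (h : IsGeodesicSegment x y s) : y ∈ s := by
  obtain ⟨γ, h0, hL, hiso, rfl⟩ := h
  exact ⟨dist x y, ⟨dist_nonneg, le_refl _⟩, hL⟩

lemma geo_symm (h : IsGeodesicSegment x y s) : IsGeodesicSegment y x s := by
  obtain ⟨γ, h0, hL, hiso, rfl⟩ := h
  refine ⟨fun t => γ (dist x y - t), by simp [hL], by rw [dist_comm]; simp [h0], ?_, ?_⟩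
  · intro t ht t' ht'
    rw [dist_comm y x] at ht ht'
    rw [hiso _ ⟨by linarith [ht.2], by linarith [ht.1]⟩ _
      ⟨by linarith [ht'.2], by linarith [ht'.1]⟩, abs_sub_comm]
    congr 1; ring
  · rw [dist_comm y x]
    have : (fun t => γ (dist x y - t)) = γ ∘ (fun t => dist x y - t) := rfl
    rw [this, Set.image_comp, Set.image_const_sub_Icc]
    simp

lemma geo_add (h : IsGeodesicSegment x y s) (hz : z ∈ s) :
    dist x z + dist z y = dist x y := by
  obtain ⟨γ, h0, hL, hiso, rfl⟩ := h
  obtain ⟨r, hr, rfl⟩ := hz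
  have h1 : dist x (γ r) = r := by
    rw [← h0, hiso 0 ⟨le_refl 0, dist_nonneg⟩ r hr, zero_sub, abs_neg,
      abs_of_nonneg hr.1]
  have h2 : dist (γ r) y = dist x y - r := by
    conv_lhs => rw [← hL]
    rw [hiso r hr (dist x y) ⟨dist_nonneg, le_refl _⟩,
      abs_of_nonpos (by linarith [hr.2])]
    ring
  rw [h1, h2]; ring

lemma geo_nearest (h : IsGeodesicSegment x y s) (w : X) :
    ∃ p ∈ s, dist w p = Metric.infDist w s := by
  obtain ⟨γ, h0, hL, hiso, rfl⟩ := h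
  have hlip : LipschitzOnWith 1 γ (Icc 0 (dist x y)) := by
    apply LipschitzOnWith.of_dist_le_mul
    intro t ht t' ht'
    rw [hiso t ht t' ht', Real.dist_eq]
    simp
  have hcomp : IsCompact (γ '' Icc 0 (dist x y)) :=
    isCompact_Icc.image_of_continuousOn hlip.continuousOn
  have hne : (γ '' Icc 0 (dist x y)).Nonempty :=
    ⟨x, 0, ⟨le_refl 0, dist_nonneg⟩, h0⟩
  obtain ⟨p, hp, hp'⟩ := hcomp.exists_infDist_eq_dist hne w
  exact ⟨p, hp, hp'.symm⟩

lemma geo_sub (h : IsGeodesicSegment x y s) (hp : p ∈ s) (hp' : p' ∈ s) :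
    ∃ s', s' ⊆ s ∧ IsGeodesicSegment p p' s' := by
  obtain ⟨γ, h0, hL, hiso, rfl⟩ := h
  obtain ⟨r, hr, rfl⟩ := hp
  obtain ⟨r', hr', rfl⟩ := hp'
  have key : ∀ u u' : ℝ, u ∈ Icc 0 (dist x y) → u' ∈ Icc 0 (dist x y) → u ≤ u' →
      ∃ s', s' ⊆ γ '' Icc 0 (dist x y) ∧ IsGeodesicSegment (γ u) (γ u') s' := by
    intro u u' hu hu' hle
    have hd : dist (γ u) (γ u') = u' - u := by
      rw [hiso u hu u' hu', abs_of_nonpos (by linarith)]; ring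
    refine ⟨(fun t => γ (u + t)) '' Icc 0 (dist (γ u) (γ u')), ?_,
      fun t => γ (u + t), by simp, by rw [hd]; congr 1; ring, ?_, rfl⟩
    · have himg : (fun t => γ (u + t)) '' Icc 0 (dist (γ u) (γ u')) = γ '' Icc u u' := by
        rw [show (fun t => γ (u + t)) = γ ∘ (fun t => u + t) from rfl, Set.image_comp,
          Set.image_const_add_Icc, hd]
        congr 1 <;> ring
      rw [himg]
      exact Set.image_mono (Icc_subset_Icc hu.1 hu'.2)
    · intro t ht t' ht'
      rw [hd] at ht ht'
      rw [hiso (u + t) ⟨by linarith [ht.1, hu.1], by linarith [ht.2, hu'.2]⟩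
        (u + t') ⟨by linarith [ht'.1, hu.1], by linarith [ht'.2, hu'.2]⟩]
      congr 1; ring
  rcases le_total r r' with hle | hle
  · exact key r r' hr hr' hle
  · obtain ⟨s', hsub, hseg⟩ := key r' r hr' hr hle
    exact ⟨s', hsub, geo_symm hseg⟩

end helpers

set_option maxHeartbeats 2000000 in
/-- for all `δ ≥ 0`, `λ ≥ 1`, `c ≥ 0` and any stability constant `R` for
`(λ,c)`-quasi-geodesics, there is `K = K(δ,λ,c)` such that in any proper `δ`-hyperbolic
geodesic space, the image of any `(M,λ,c)`-local-quasi-geodesic on a closed interval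
with `M > 4Rλ + 8δλ + 2cλ + 1` lies in the `K`-neighborhood of any geodesic segment
joining its endpoints. -/
theorem local_quasi_geodesic_close_to_geodesic
    (δ lam c : ℝ) (hδ : 0 ≤ δ) (hlam : 1 ≤ lam) (hc : 0 ≤ c) (R : ℝ)
    (hstab : ∀ (X : Type) [MetricSpace X] [ProperSpace X], DeltaHyperbolic X δ →
      ∀ (q : ℝ → X) (a b : ℝ), a ≤ b → QuasiGeodesicOn q (Icc a b) lam c →
      ∀ s : Set X, IsGeodesicSegment (q a) (q b) s →
        (∀ t ∈ Icc a b, ∃ p ∈ s, dist (q t) p ≤ R) ∧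
        (∀ p ∈ s, ∃ t ∈ Icc a b, dist p (q t) ≤ R)) :
    ∃ K : ℝ, 0 ≤ K ∧
      ∀ (X : Type) [MetricSpace X] [ProperSpace X], DeltaHyperbolic X δ →
      ∀ (q : ℝ → X) (a b M : ℝ), a ≤ b →
        4*R*lam + 8*δ*lam + 2*c*lam + 1 < M →
        LocalQuasiGeodesicOn q (Icc a b) M lam c →
        ∀ s : Set X, IsGeodesicSegment (q a) (q b) s →
        ∀ t ∈ Icc a b, ∃ p ∈ s, dist (q t) p ≤ K := by
  have hlam0 : (0:ℝ) < lam := lt_of_lt_of_le one_pos hlam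
  refine ⟨|R| + 2*δ + 1, by positivity, ?_⟩
  intro X _ _ hyp q a b M hab hM hloc s hs t ht
  -- R is nonnegative
  have hR0 : 0 ≤ R := by
    obtain ⟨s₀, hs₀⟩ := hyp.1 (q a) (q a)
    have hQG0 : QuasiGeodesicOn q (Icc a a) lam c := by
      intro t ht t' ht'
      simp only [Icc_self, mem_singleton_iff] at ht ht'
      subst ht; subst ht'
      refine ⟨?_, ?_⟩ <;> simp [dist_self] <;> linarith
    obtain ⟨p, hp, hdp⟩ := (hstab X hyp q a a le_rfl hQG0 s₀ hs₀).1 a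
      ⟨le_refl a, le_refl a⟩
    exact le_trans dist_nonneg hdp
  have hqa : q a ∈ s := geo_mem_left hs
  have hqb : q b ∈ s := geo_mem_right hs
  set m : ℝ := M / 2 with hm_def
  have hm : 2*R*lam + 4*δ*lam + c*lam + 1/2 < m := by
    rw [hm_def]; linarith
  have hm0 : 0 < m := by nlinarith
  have hmM : m ≤ M := by linarith
  have hM0 : 0 ≤ M := by linarith
  -- quasi-geodesic on windows
  have hwin : ∀ u v : ℝ, a ≤ u → v ≤ b → u ≤ v → v - u ≤ M →
      QuasiGeodesicOn q (Icc u v) lam c := by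
    intro u v h1 h2 h3 h4
    have := hloc u v ⟨h1, le_trans h3 h2⟩ ⟨le_trans h1 h3, h2⟩ h3 h4
    rwa [inter_eq_self_of_subset_right (Icc_subset_Icc h1 h2)] at this
  -- distance function to s
  set D : ℝ → ℝ := fun t => Metric.infDist (q t) s with hD_def
  -- chain bound
  have hchain : ∀ n : ℕ, ∀ t, a ≤ t → t ≤ b → t - a ≤ n * m →
      dist (q t) (q a) ≤ n * (lam * M + c) := by
    intro n
    induction n with
    | zero =>
      intro t h1 h2 h3
      simp only [Nat.cast_zero, zero_mul] at h3 ⊢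
      have : t = a := le_antisymm (by linarith) h1
      simp [this]
    | succ n ih =>
      intro t h1 h2 h3
      rcases le_or_gt (t - a) (n * m) with h | h
      · refine le_trans (ih t h1 h2 h) ?_
        have : (0:ℝ) ≤ lam * M + c := by positivity
        have hn : (n:ℝ) ≤ (n+1:ℕ) := by push_cast; linarith
        calc (n:ℝ) * (lam * M + c) ≤ ((n:ℕ)+1) * (lam * M + c) := by nlinarith
          _ = ((n+1 : ℕ):ℝ) * (lam * M + c) := by push_cast; ring
      · set t' : ℝ := max a (t - m) with ht'_def
        have ht'a : a ≤ t' := le_max_left _ _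
        have ht't : t' ≤ t := max_le h1 (by linarith)
        have ht'b : t' ≤ b := le_trans ht't h2
        have hstep : t - t' ≤ m := by
          have : t - m ≤ t' := le_max_right _ _
          linarith
        have ht'n : t' - a ≤ n * m := by
          rcases max_cases a (t - m) with ⟨he, _⟩ | ⟨he, _⟩
          · rw [ht'_def, he]; simp; positivity
          · rw [ht'_def, he]; push_cast at h3 ⊢; linarith
        have hQG := hwin t' t ht'a h2 ht't (by linarith)
        have hd := (hQG t ⟨ht't, le_refl t⟩ t' ⟨le_refl t', ht't⟩).2
        have habs : |t - t'| = t - t' := abs_of_nonneg (by linarith)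
        rw [habs] at hd
        calc dist (q t) (q a) ≤ dist (q t) (q t') + dist (q t') (q a) := dist_triangle _ _ _
          _ ≤ (lam * (t - t') + c) + n * (lam * M + c) := by
              exact add_le_add hd (ih t' ht'a ht'b ht'n)
          _ ≤ (lam * M + c) + n * (lam * M + c) := by nlinarith
          _ = ((n+1 : ℕ):ℝ) * (lam * M + c) := by push_cast; ring
  -- boundedness of D on [a,b]
  have hbdd : BddAbove (D '' Icc a b) := by
    refine ⟨(⌈(b - a)/m⌉₊ : ℝ) * (lam * M + c), ?_⟩
    rintro _ ⟨t', ht', rfl⟩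
    have h1 : t' - a ≤ (⌈(b - a)/m⌉₊ : ℝ) * m := by
      have h2 : (b - a)/m ≤ (⌈(b - a)/m⌉₊ : ℝ) := Nat.le_ceil _
      have := (div_le_iff₀ hm0).mp h2
      linarith [ht'.2]
    calc D t' ≤ dist (q t') (q a) := Metric.infDist_le_dist_of_mem hqa
      _ ≤ _ := hchain _ t' ht'.1 ht'.2 h1
  have hne : (D '' Icc a b).Nonempty := ⟨D a, ⟨a, ⟨le_refl a, hab⟩, rfl⟩⟩
  set σ : ℝ := sSup (D '' Icc a b) with hσ_def
  set ε : ℝ := 1 / (4 * lam) with hε_def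
  have hε0 : 0 < ε := by positivity
  have hεlam : ε * lam = 1/4 := by
    rw [hε_def]; field_simp
  have hεle : ε ≤ 1 := by
    rw [hε_def]
    rw [div_le_one (by positivity)]
    linarith
  -- pick near-maximizer
  obtain ⟨d₀, ⟨t₀, ht₀, hd₀eq⟩, hd₀⟩ := exists_lt_of_lt_csSup hne
    (show σ - ε < σ by linarith)
  rw [← hd₀eq] at hd₀
  clear hd₀eq
  simp only [hD_def] at hd₀
  -- main claim: near-maximizer is (R + 2δ)-close to s
  have hmain : Metric.infDist (q t₀) s ≤ R + 2*δ := by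
    set u : ℝ := max a (t₀ - m) with hu_def
    set v : ℝ := min b (t₀ + m) with hv_def
    have hau : a ≤ u := le_max_left _ _
    have hut₀ : u ≤ t₀ := max_le ht₀.1 (by linarith)
    have ht₀v : t₀ ≤ v := le_min ht₀.2 (by linarith)
    have hvb : v ≤ b := min_le_left _ _
    have huv : u ≤ v := le_trans hut₀ ht₀v
    have hvuM : v - u ≤ M := by
      have h1 : t₀ - m ≤ u := le_max_right _ _
      have h2 : v ≤ t₀ + m := min_le_right _ _
      have h3 : m + m = M := by rw [hm_def]; ring
      linarith
    have hQG := hwin u v hau hvb huv hvuM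
    obtain ⟨sg, hsg⟩ := hyp.1 (q u) (q v)
    obtain ⟨y, hy_mem, hy⟩ := (hstab X hyp q u v huv hQG sg hsg).1 t₀ ⟨hut₀, ht₀v⟩
    obtain ⟨pu, hpu_mem, hpu⟩ := geo_nearest hs (q u)
    obtain ⟨pv, hpv_mem, hpv⟩ := geo_nearest hs (q v)
    have hDu : dist (q u) pu ≤ σ := by
      rw [hpu]
      have := le_csSup hbdd (mem_image_of_mem D ⟨hau, le_trans huv hvb⟩)
      simpa [hD_def] using this
    have hDv : dist (q v) pv ≤ σ := by
      rw [hpv]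
      have := le_csSup hbdd (mem_image_of_mem D ⟨le_trans hau huv, hvb⟩)
      simpa [hD_def] using this
    obtain ⟨sv, hsv⟩ := hyp.1 (q v) pv
    obtain ⟨sd, hsd⟩ := hyp.1 (q u) pv
    obtain ⟨su, hsu⟩ := hyp.1 (q u) pu
    obtain ⟨s', hs'sub, hs'⟩ := geo_sub hs hpv_mem hpu_mem
    have hinv : lam⁻¹ * lam = 1 := inv_mul_cancel₀ hlam0.ne'
    obtain ⟨w, hw_mem, hw⟩ := hyp.2 (q u) (q v) pv sg sv sd hsg hsv (geo_symm hsd) y hy_mem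
    rcases hw_mem with hw_v | hw_d
    · -- w lies on the side [q v, pv]
      have hadd := geo_add hsv hw_v
      have h1 : Metric.infDist (q t₀) s ≤ R + δ + dist w pv := by
        calc Metric.infDist (q t₀) s ≤ dist (q t₀) pv :=
              Metric.infDist_le_dist_of_mem hpv_mem
          _ ≤ dist (q t₀) y + dist y w + dist w pv := dist_triangle4 _ _ _ _
          _ ≤ R + δ + dist w pv := by linarith [hy, hw]
      by_cases hcase : t₀ + m ≤ b
      · exfalso
        have hveq : v = t₀ + m := min_eq_right hcase
        have hlow := (hQG t₀ ⟨hut₀, ht₀v⟩ v ⟨huv, le_refl v⟩).1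
        have habs : |t₀ - v| = m := by
          rw [hveq, abs_of_nonpos (by linarith)]; ring
        rw [habs] at hlow
        have h2 : dist (q t₀) (q v) ≤ R + δ + dist (q v) w := by
          calc dist (q t₀) (q v) ≤ dist (q t₀) y + dist y w + dist w (q v) :=
                dist_triangle4 _ _ _ _
            _ = dist (q t₀) y + dist y w + dist (q v) w := by rw [dist_comm w (q v)]
            _ ≤ R + δ + dist (q v) w := by linarith [hy, hw]
        have h4 : lam⁻¹ * m - c ≤ 2*R + 2*δ + ε := by linarith
        have h5 := mul_le_mul_of_nonneg_right h4 hlam0.le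
        nlinarith [h5, hinv, hεlam, hm, mul_nonneg hδ hlam0.le]
      · -- here v = b and pv = q b
        have hveq : v = b := min_eq_left (by linarith)
        have hz0 : dist (q v) pv = 0 := by
          rw [hpv, hveq]
          refine le_antisymm ?_ Metric.infDist_nonneg
          simpa using Metric.infDist_le_dist_of_mem hqb (x := q b)
        have hwpv : dist w pv = 0 := by
          have h01 : (0:ℝ) ≤ dist (q v) w := dist_nonneg
          have h02 : (0:ℝ) ≤ dist w pv := dist_nonneg
          linarith
        linarith
    · -- w lies on the diagonal [q u, pv]: second triangle
      obtain ⟨z, hz_mem, hz⟩ := hyp.2 (q u) pv pu sd s' su hsd hs' (geo_symm hsu) w hw_d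
      have hA : dist (q t₀) z ≤ R + 2*δ := by
        calc dist (q t₀) z ≤ dist (q t₀) y + dist y w + dist w z := dist_triangle4 _ _ _ _
          _ ≤ R + 2*δ := by linarith [hy, hw, hz]
      rcases hz_mem with hz_s | hz_u
      · -- z lies on s
        exact le_trans (Metric.infDist_le_dist_of_mem (hs'sub hz_s)) hA
      · -- z lies on the side [q u, pu]
        have hadd := geo_add hsu hz_u
        have h1 : Metric.infDist (q t₀) s ≤ R + 2*δ + dist z pu := by
          calc Metric.infDist (q t₀) s ≤ dist (q t₀) pu :=
                Metric.infDist_le_dist_of_mem hpu_mem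
            _ ≤ dist (q t₀) z + dist z pu := dist_triangle _ _ _
            _ ≤ R + 2*δ + dist z pu := by linarith
        by_cases hcase : a ≤ t₀ - m
        · exfalso
          have hueq : u = t₀ - m := max_eq_right hcase
          have hlow := (hQG t₀ ⟨hut₀, ht₀v⟩ u ⟨le_refl u, huv⟩).1
          have habs : |t₀ - u| = m := by
            rw [hueq, abs_of_nonneg (by linarith)]; ring
          rw [habs] at hlow
          have h2 : dist (q t₀) (q u) ≤ R + 2*δ + dist (q u) z := by
            calc dist (q t₀) (q u) ≤ dist (q t₀) z + dist z (q u) := dist_triangle _ _ _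
              _ = dist (q t₀) z + dist (q u) z := by rw [dist_comm z (q u)]
              _ ≤ R + 2*δ + dist (q u) z := by linarith
          have h4 : lam⁻¹ * m - c ≤ 2*R + 4*δ + ε := by linarith
          have h5 := mul_le_mul_of_nonneg_right h4 hlam0.le
          nlinarith [h5, hinv, hεlam, hm, mul_nonneg hδ hlam0.le]
        · -- here u = a and pu = q a
          have hueq : u = a := max_eq_left (by linarith)
          have hz0 : dist (q u) pu = 0 := by
            rw [hpu, hueq]
            refine le_antisymm ?_ Metric.infDist_nonneg
            simpa using Metric.infDist_le_dist_of_mem hqa (x := q a)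
          have hzpu : dist z pu = 0 := by
            have h01 : (0:ℝ) ≤ dist (q u) z := dist_nonneg
            have h02 : (0:ℝ) ≤ dist z pu := dist_nonneg
            linarith
          linarith
  -- conclude
  have hfin : Metric.infDist (q t) s ≤ R + 2*δ + ε := by
    have h1 : D t ≤ σ := le_csSup hbdd (mem_image_of_mem D ht)
    simp only [hD_def] at h1
    linarith
  obtain ⟨p, hp_mem, hp⟩ := geo_nearest hs (q t)
  refine ⟨p, hp_mem, ?_⟩
  rw [hp]
  linarith [le_abs_self R, hεle]
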